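/- For real x with |x| < 1, ∑_{n=1}^{∞} (H_n/n) x^n = (1/2) log²(1-x) + Li₂(x), where Li₂(x) = ∑_{k=1}^∞ x^k/k². -/

import Mathlib

/-- The dilogarithm, defined by its power series (convergent for `|x| ≤ 1`). -/
noncomputable def Li2 (x : ℝ) : ℝ := ∑' k : ℕ, x ^ (k + 1) / ((k : ℝ) + 1) ^ 2

open Finset Real

private lemma hs_congr {f g : ℕ → ℝ} {a : ℝ} (h : ∀ n, f n = g n) (hf : HasSum f a) :
    HasSum g a := (funext h : f = g) ▸ hf

lemma key_finite (n : ℕ) :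
    ∑ k ∈ range (n + 1), (1:ℝ) / ((k + 1) * (n - k + 1)) =
      2 / (n + 2) * ∑ k ∈ Finset.Icc 1 (n + 1), (1:ℝ) / k := by
  have h1 : ∀ k ∈ range (n + 1), (1:ℝ) / ((k + 1) * (n - k + 1)) =
      1 / (n + 2) * (1 / (k + 1) + 1 / ((n:ℝ) - k + 1)) := by
    intro k hk
    have hk' : (k:ℝ) ≤ n := by
      exact_mod_cast Nat.lt_succ_iff.mp (mem_range.mp hk)
    have h2 : (0:ℝ) < k + 1 := by positivity
    have h3 : (0:ℝ) < (n:ℝ) - k + 1 := by linarith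
    field_simp
    ring
  rw [Finset.sum_congr rfl h1, ← Finset.mul_sum, Finset.sum_add_distrib]
  have h4 : ∑ k ∈ range (n + 1), (1:ℝ) / ((n:ℝ) - k + 1) =
      ∑ k ∈ range (n + 1), (1:ℝ) / (k + 1) := by
    rw [← Finset.sum_range_reflect]
    apply Finset.sum_congr rfl
    intro k hk
    have hk' : k ≤ n := Nat.lt_succ_iff.mp (mem_range.mp hk)
    congr 1
    push_cast [Nat.cast_sub hk']
    ring
  have h5 : ∑ k ∈ range (n + 1), (1:ℝ) / (k + 1) =
      ∑ k ∈ Finset.Icc 1 (n + 1), (1:ℝ) / k := by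
    rw [← Finset.Ico_add_one_right_eq_Icc, Finset.sum_Ico_eq_sum_range]
    norm_num
    apply Finset.sum_congr rfl
    intro k _
    rw [add_comm]
  rw [h4, h5]
  ring

theorem harmonic_over_n_generating_function (x : ℝ) (hx : |x| < 1) :
    HasSum (fun n : ℕ =>
        (∑ k ∈ Finset.Icc 1 (n + 1), (1 : ℝ) / k) / ((n : ℝ) + 1) * x ^ (n + 1))
      ((1 / 2) * (Real.log (1 - x)) ^ 2 + Li2 x) := by
  set f : ℕ → ℝ := fun n => x ^ (n + 1) / (n + 1) with hf
  have hlog : HasSum f (-Real.log (1 - x)) := hasSum_pow_div_log_of_abs_lt_one hx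
  have hnorm : Summable fun n => ‖f n‖ := by
    apply ((hasSum_pow_div_log_of_abs_lt_one (x := |x|) (by rwa [abs_abs])).summable).congr
    intro n
    have : (0:ℝ) ≤ (n:ℝ) + 1 := by positivity
    simp [hf, abs_div, abs_pow, abs_of_nonneg this]
  -- Cauchy product
  have hcauchy : HasSum (fun n => ∑ k ∈ range (n + 1), f k * f (n - k))
      ((Real.log (1 - x)) ^ 2) := by
    have := hasSum_sum_range_mul_of_summable_norm hnorm hnorm
    rw [hlog.tsum_eq] at this
    convert this using 1
    all_goals first | rfl | ring
  -- rewrite the Cauchy coefficient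
  have hc : ∀ n : ℕ, ∑ k ∈ range (n + 1), f k * f (n - k) =
      2 / (n + 2) * (∑ k ∈ Finset.Icc 1 (n + 1), (1:ℝ) / k) * x ^ (n + 2) := by
    intro n
    have : ∀ k ∈ range (n + 1), f k * f (n - k) =
        (1:ℝ) / ((k + 1) * ((n:ℝ) - k + 1)) * x ^ (n + 2) := by
      intro k hk
      have hk' : k ≤ n := Nat.lt_succ_iff.mp (mem_range.mp hk)
      have h2 : (0:ℝ) < (k:ℝ) + 1 := by positivity
      have hk'' : (k:ℝ) ≤ n := by exact_mod_cast hk'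
      have h3 : (0:ℝ) < (n:ℝ) - k + 1 := by linarith
      simp only [hf]
      rw [Nat.cast_sub hk']
      rw [div_mul_div_comm, ← pow_add]
      have : k + 1 + (n - k + 1) = n + 2 := by omega
      rw [this]
      field_simp
    rw [Finset.sum_congr rfl this, ← Finset.sum_mul, key_finite n]
  simp_rw [hc] at hcauchy
  -- half of it
  have hhalf : HasSum (fun n : ℕ =>
      (∑ k ∈ Finset.Icc 1 (n + 1), (1:ℝ) / k) / ((n:ℝ) + 2) * x ^ (n + 2))
      ((1 / 2) * (Real.log (1 - x)) ^ 2) := by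
    apply hs_congr _ (hcauchy.mul_left (1 / 2))
    intro n
    have h2 : (0:ℝ) < (n:ℝ) + 2 := by positivity
    field_simp
  -- shift index: g n = H_n/(n+1) x^(n+1)
  set g : ℕ → ℝ := fun n =>
    (∑ k ∈ Finset.Icc 1 n, (1:ℝ) / k) / ((n:ℝ) + 1) * x ^ (n + 1) with hg
  have hgshift : HasSum g ((1 / 2) * (Real.log (1 - x)) ^ 2) := by
    have h0 : ∀ n : ℕ, (∑ k ∈ Finset.Icc 1 (n + 1), (1:ℝ) / k) / ((n:ℝ) + 2) * x ^ (n + 2)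
        = g (n + 1) := by
      intro n
      simp only [hg]
      push_cast
      ring
    have := (hasSum_nat_add_iff (f := g) 1).mp (hs_congr h0 hhalf)
    simpa [hg] using this
  -- Li2 part
  have hgeo : Summable fun n : ℕ => |x| ^ (n + 1) := by
    apply ((summable_geometric_of_lt_one (abs_nonneg x) hx).mul_left |x|).congr
    intro n
    rw [pow_succ]
    ring
  have hLisummable : Summable fun n : ℕ => x ^ (n + 1) / ((n:ℝ) + 1) ^ 2 := by
    apply Summable.of_norm_bounded hgeo
    intro n
    rw [norm_div, norm_pow, Real.norm_eq_abs]
    have h1 : (1:ℝ) ≤ ‖((n:ℝ) + 1) ^ 2‖ := by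
      rw [Real.norm_eq_abs, abs_of_nonneg (by positivity)]
      nlinarith [Nat.cast_nonneg (α := ℝ) n]
    calc |x| ^ (n + 1) / ‖((n:ℝ) + 1) ^ 2‖ ≤ |x| ^ (n + 1) / 1 :=
          div_le_div_of_nonneg_left (by positivity) (by norm_num) h1
      _ = |x| ^ (n + 1) := by rw [div_one]
  have hLi : HasSum (fun n : ℕ => x ^ (n + 1) / ((n:ℝ) + 1) ^ 2) (Li2 x) :=
    hLisummable.hasSum
  -- combine
  apply hs_congr _ (hgshift.add hLi)
  intro n
  have hsplit : ∑ k ∈ Finset.Icc 1 (n + 1), (1:ℝ) / k =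
      (∑ k ∈ Finset.Icc 1 n, (1:ℝ) / k) + 1 / ((n:ℝ) + 1) := by
    rw [Finset.sum_Icc_succ_top (by omega : 1 ≤ n + 1)]
    push_cast
    ring
  rw [hsplit]
  have h2 : (0:ℝ) < (n:ℝ) + 1 := by positivity
  simp only [hg]
  field_simp
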